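/- Let (K,K') be a shifted family pair on ground set [1,n], where for each vertex λ, d_λ(K,K') = |{F ∈ K : λ ∈ F and F∖{λ} ∉ K'}|. Then the degrees are weakly decreasing in the vertex order: if 1 ≤ λ < μ ≤ n, then d_λ(K,K') ≥ d_μ(K,K'). -/

import Mathlib

open Finset

/-- Componentwise domination on finsets of naturals. -/
def domP (F G : Finset ℕ) : Prop :=
  List.Forall₂ (· ≤ ·) (F.sort (· ≤ ·)) (G.sort (· ≤ ·))

/-- Shifted with respect to the ordered ground set `A`. -/
def ShiftedOn (A : Finset ℕ) (K : Finset (Finset ℕ)) : Prop :=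
  ∀ G ∈ K, ∀ F ⊆ A, domP F G → F ∈ K

/-- The degree of a vertex `λ` in the family pair `(K,K')`:
`d_λ(K,K') = |{F ∈ K : λ ∈ F, F∖{λ} ∉ K'}|`. -/
def pairDeg (K K' : Finset (Finset ℕ)) (l : ℕ) : ℕ :=
  (K.filter (fun F => l ∈ F ∧ F.erase l ∉ K')).card

/-- Prepending a lower bound and erasing an element dominates. -/
lemma listB : ∀ {u : List ℕ}, u.Pairwise (· ≤ ·) → ∀ (x m : ℕ), m ∈ u → (∀ y ∈ u, x ≤ y) →
    List.Forall₂ (· ≤ ·) (x :: u.erase m) u := by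
  intro u
  induction u with
  | nil => intro _ x m hm; simp at hm
  | cons b u' ih =>
    intro hs x m hm hx
    rcases eq_or_ne m b with rfl | hne
    · rw [List.erase_cons_head]
      exact List.Forall₂.cons (hx m (by simp)) (List.forall₂_refl u')
    · have hmu' : m ∈ u' := by
        rcases List.mem_cons.mp hm with h | h
        · exact absurd h hne
        · exact h
      rw [List.erase_cons_tail (by simpa using fun h => hne h.symm)]
      refine List.Forall₂.cons (hx b (by simp)) ?_
      exact ih (List.Pairwise.of_cons hs) b m hmu'
        (fun y hy => List.rel_of_pairwise_cons hs hy)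

/-- Ordered-inserting a smaller element after erasing a larger one dominates. -/
lemma listA {l m : ℕ} (hlm : l ≤ m) : ∀ {s : List ℕ}, s.Pairwise (· ≤ ·) → m ∈ s →
    List.Forall₂ (· ≤ ·) (List.orderedInsert (· ≤ ·) l (s.erase m)) s := by
  intro s
  induction s with
  | nil => intro _ hm; simp at hm
  | cons a s' ih =>
    intro hs hm
    rcases eq_or_ne m a with rfl | hne
    · rw [List.erase_cons_head]
      cases s' with
      | nil => simpa using hlm
      | cons c s'' =>
        have hac : m ≤ c := (List.rel_of_pairwise_cons hs (by simp))
        rw [List.orderedInsert, if_pos (hlm.trans hac)]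
        exact List.Forall₂.cons hlm (List.forall₂_refl _)
    · have hms' : m ∈ s' := by
        rcases List.mem_cons.mp hm with h | h
        · exact absurd h hne
        · exact h
      rw [List.erase_cons_tail (by simpa using fun h => hne h.symm)]
      rw [List.orderedInsert]
      by_cases hla : l ≤ a
      · rw [if_pos hla]
        refine List.Forall₂.cons hla ?_
        exact listB (List.Pairwise.of_cons hs) a m hms'
          (fun y hy => List.rel_of_pairwise_cons hs hy)
      · rw [if_neg hla]
        exact List.Forall₂.cons le_rfl (ih (List.Pairwise.of_cons hs) hms')

/-- Replacing an element `m` of `G` by a smaller element `l` yields a set dominated by `G`. -/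
lemma domP_replace {G : Finset ℕ} {l m : ℕ} (hlm : l ≤ m) (hl : l ∉ G) (hm : m ∈ G) :
    domP (insert l (G.erase m)) G := by
  classical
  unfold domP
  have hkey : (insert l (G.erase m)).sort (· ≤ ·)
      = List.orderedInsert (· ≤ ·) l ((G.sort (· ≤ ·)).erase m) := by
    refine (fun hp h1 h2 => List.Perm.eq_of_pairwise' (r := (· ≤ ·)) h1 h2 hp) ?_ ?_ ?_
    · -- both are permutations of the same multiset
      rw [← Multiset.coe_eq_coe, Finset.sort_eq]
      have hln : l ∉ G.erase m := fun h => hl (Finset.mem_of_mem_erase h)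
      have h1 : (insert l (G.erase m)).val = l ::ₘ (G.val.erase m) := by
        rw [Finset.insert_val, Multiset.ndinsert_of_notMem hln, Finset.erase_val]
      rw [h1]
      have h2 : (↑(List.orderedInsert (· ≤ ·) l ((G.sort (· ≤ ·)).erase m)) : Multiset ℕ)
          = l ::ₘ ↑((G.sort (· ≤ ·)).erase m) := by
        rw [Multiset.coe_eq_coe.mpr (List.perm_orderedInsert _ _ _)]
        rfl
      rw [h2, ← Multiset.coe_erase, Finset.sort_eq]
    · exact Finset.pairwise_sort _ _
    · exact List.Pairwise.orderedInsert _ _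
        (List.Pairwise.sublist List.erase_sublist (Finset.pairwise_sort _ _))
  rw [hkey]
  exact listA hlm (Finset.pairwise_sort _ _) (by simpa using hm)

/-- **Degrees of a shifted family pair are weakly decreasing in the vertex order.**
Let `(K,K')` be a shifted family pair on `[1,n]`, with `K` a `k`-family and `K'`
a `(k−1)`-family.  If `1 ≤ λ < μ ≤ n` then `d_λ(K,K') ≥ d_μ(K,K')`. -/
theorem pairDeg_monotone (n k : ℕ) (K K' : Finset (Finset ℕ))
    (hKA : ∀ F ∈ K, F ⊆ Finset.Icc 1 n) (hK'A : ∀ F ∈ K', F ⊆ Finset.Icc 1 n)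
    (hKk : ∀ F ∈ K, F.card = k) (hK'k : ∀ F ∈ K', F.card = k - 1)
    (hK : ShiftedOn (Finset.Icc 1 n) K) (hK' : ShiftedOn (Finset.Icc 1 n) K')
    (l m : ℕ) (hl : 1 ≤ l) (hlm : l < m) (hm : m ≤ n) :
    pairDeg K K' m ≤ pairDeg K K' l := by
  classical
  have hlmne : l ≠ m := hlm.ne
  apply Finset.card_le_card_of_injOn (fun F => if l ∈ F then F else insert l (F.erase m))
  · intro F hF
    simp only [Finset.mem_coe, Finset.mem_filter] at hF
    obtain ⟨hFK, hmF, hFK'⟩ := hF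
    by_cases hlF : l ∈ F
    · simp only [if_pos hlF, Finset.mem_coe, Finset.mem_filter]
      refine ⟨hFK, hlF, fun hcon => hFK' ?_⟩
      -- F.erase m is dominated by F.erase l
      have heq : insert l ((F.erase l).erase m) = F.erase m := by
        rw [Finset.erase_right_comm, Finset.insert_erase
          (Finset.mem_erase.mpr ⟨hlmne, hlF⟩)]
      have hdom : domP (F.erase m) (F.erase l) := by
        rw [← heq]
        exact domP_replace hlm.le (Finset.notMem_erase _ _)
          (Finset.mem_erase.mpr ⟨fun h => hlmne h.symm, hmF⟩)
      exact hK' (F.erase l) hcon (F.erase m)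
        ((Finset.erase_subset _ _).trans (hKA F hFK)) hdom
    · simp only [if_neg hlF, Finset.mem_coe, Finset.mem_filter]
      have hlIcc : l ∈ Finset.Icc 1 n := Finset.mem_Icc.mpr ⟨hl, le_trans hlm.le hm⟩
      have hsub : insert l (F.erase m) ⊆ Finset.Icc 1 n :=
        Finset.insert_subset hlIcc ((Finset.erase_subset _ _).trans (hKA F hFK))
      have hdom : domP (insert l (F.erase m)) F := domP_replace hlm.le hlF hmF
      refine ⟨hK F hFK _ hsub hdom, Finset.mem_insert_self _ _, ?_⟩
      rw [Finset.erase_insert (fun h => hlF (Finset.mem_of_mem_erase h))]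
      exact hFK'
  · intro F1 h1 F2 h2 heq
    simp only [Finset.mem_coe, Finset.mem_filter] at h1 h2
    dsimp only at heq
    by_cases h1l : l ∈ F1 <;> by_cases h2l : l ∈ F2
    · rwa [if_pos h1l, if_pos h2l] at heq
    · rw [if_pos h1l, if_neg h2l] at heq
      exfalso
      have : m ∈ insert l (F2.erase m) := heq ▸ h1.2.1
      rcases Finset.mem_insert.mp this with h | h
      · exact hlmne h.symm
      · exact Finset.notMem_erase _ _ h
    · rw [if_neg h1l, if_pos h2l] at heq
      exfalso
      have : m ∈ insert l (F1.erase m) := heq ▸ h2.2.1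
      rcases Finset.mem_insert.mp this with h | h
      · exact hlmne h.symm
      · exact Finset.notMem_erase _ _ h
    · rw [if_neg h1l, if_neg h2l] at heq
      have he : F1.erase m = F2.erase m := by
        have := congrArg (fun s => Finset.erase s l) heq
        rwa [Finset.erase_insert (fun h => h1l (Finset.mem_of_mem_erase h)),
          Finset.erase_insert (fun h => h2l (Finset.mem_of_mem_erase h))] at this
      calc F1 = insert m (F1.erase m) := (Finset.insert_erase h1.2.1).symm
        _ = insert m (F2.erase m) := by rw [he]
        _ = F2 := Finset.insert_erase h2.2.1
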